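/- For any even positive integer k, in H_t = Q[t]⟨x,y⟩ one has Σ_{j=0}^{k} (−1)^j (z₂ z₁^j ⧢_t z₂ z₁^{k−j}) = 2[ Σ_{a₁+⋯+a_{k+2}=1, a_i≥0} (a_{k+2}+1) z_{a_{k+2}+2} z_{a₁+1} ⋯ z_{a_{k+1}+1} + t Σ_{i=0}^{k−1} (2(−1)^i − 1) z₂ z₁^i z₃ z₁^{k−i−1} − 3t z₄ z₁^k ], where z_n = x^{n−1} y. -/

import Mathlib

open scoped BigOperators

noncomputable section

abbrev Rt : Type := Polynomial ℚ
abbrev Ht : Type := MonoidAlgebra Rt (FreeMonoid (Fin 2))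

/-- The word `l` as an element of `H_t`. -/
def wd (l : List (Fin 2)) : Ht :=
  MonoidAlgebra.of Rt (FreeMonoid (Fin 2)) (FreeMonoid.ofList l)

/-- The letter `x`. -/
def wx : Ht := wd [0]
/-- The letter `y`. -/
def wy : Ht := wd [1]

/-- ρ(x) = 0, ρ(y) = t·x. -/
def ρt : Fin 2 → Ht := fun a => if a = 1 then (Polynomial.X : Rt) • wx else 0

/-- δ: indicator of the empty word. -/
def δw : List (Fin 2) → Rt := fun w => if w = [] then 1 else 0

/-- The t-shuffle product on words. -/
def tshW : List (Fin 2) → List (Fin 2) → Ht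
  | [], w => wd w
  | a :: w, [] => wd (a :: w)
  | a :: w1, b :: w2 =>
      wd [a] * tshW w1 (b :: w2) + wd [b] * tshW (a :: w1) w2
        - δw w1 • (ρt a * wd (b :: w2)) - δw w2 • (ρt b * wd (a :: w1))
  termination_by w1 w2 => w1.length + w2.length

/-- The ordinary shuffle product (t = 0 case) on words. -/
def shW : List (Fin 2) → List (Fin 2) → Ht
  | [], w => wd w
  | a :: w, [] => wd (a :: w)
  | a :: w1, b :: w2 =>
      wd [a] * shW w1 (b :: w2) + wd [b] * shW (a :: w1) w2
  termination_by w1 w2 => w1.length + w2.length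

/-- The t-shuffle product on `H_t`, extended Q[t]-bilinearly. -/
def tshH (u v : Ht) : Ht :=
  u.coeff.sum fun w1 c1 => v.coeff.sum fun w2 c2 =>
    (c1 * c2) • tshW (FreeMonoid.toList w1) (FreeMonoid.toList w2)

/-- The ordinary shuffle product on `H_t`, extended Q[t]-bilinearly. -/
def shH (u v : Ht) : Ht :=
  u.coeff.sum fun w1 c1 => v.coeff.sum fun w2 c2 =>
    (c1 * c2) • shW (FreeMonoid.toList w1) (FreeMonoid.toList w2)


/-- `z_n = x^{n-1} y`. -/
def zzw (n : ℕ) : Ht := wx ^ (n - 1) * wy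


-- ============ auxiliary development ============
section Aux
open Finset

/-- `y^m` as a list. -/
def YY (m : ℕ) : List (Fin 2) := List.replicate m 1

/-- word `x y^i x y^q`. -/
def W2 (i q : ℕ) : List (Fin 2) := 0 :: (YY i ++ 0 :: YY q)
/-- word `x y^i x y^p x y^q`. -/
def W3 (i p q : ℕ) : List (Fin 2) := 0 :: (YY i ++ 0 :: (YY p ++ 0 :: YY q))

lemma wd_append (l₁ l₂ : List (Fin 2)) : wd (l₁ ++ l₂) = wd l₁ * wd l₂ := by
  simp [wd, ← map_mul]

lemma wd_nil : wd [] = 1 := by simp [wd]; rfl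

lemma wd_cons (a : Fin 2) (l : List (Fin 2)) : wd (a :: l) = wd [a] * wd l := by
  rw [← wd_append]; rfl

lemma YY_succ (m : ℕ) : YY (m + 1) = 1 :: YY m := rfl

lemma YY_cons_append (m : ℕ) (r : List (Fin 2)) :
    (1 : Fin 2) :: (YY m ++ r) = YY (m+1) ++ r := rfl

lemma wy_pow (m : ℕ) : wy ^ m = wd (YY m) := by
  induction m with
  | zero => simp [YY, wd_nil]
  | succ n ih => rw [pow_succ', ih, wy, YY_succ, ← wd_cons]

lemma tshW_cons (a b : Fin 2) (w1 w2 : List (Fin 2)) :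
    tshW (a :: w1) (b :: w2) =
      wd [a] * tshW w1 (b :: w2) + wd [b] * tshW (a :: w1) w2
        - δw w1 • (ρt a * wd (b :: w2)) - δw w2 • (ρt b * wd (a :: w1)) := by
  rw [tshW]

lemma tshW_nil_left (w : List (Fin 2)) : tshW [] w = wd w := by rw [tshW]

lemma tshW_nil_right (w : List (Fin 2)) : tshW w [] = wd w := by
  cases w with
  | nil => rw [tshW]
  | cons a w => rw [tshW]

lemma tshW_comm (w1 w2 : List (Fin 2)) : tshW w1 w2 = tshW w2 w1 := by
  induction w1, w2 using tshW.induct with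
  | case1 w => rw [tshW_nil_left, tshW_nil_right]
  | case2 a w => rw [tshW_nil_left, tshW_nil_right]
  | case3 a w1 b w2 ih1 ih2 =>
      rw [tshW_cons, tshW_cons, ih1, ih2]
      abel

lemma tshH_wd (l₁ l₂ : List (Fin 2)) : tshH (wd l₁) (wd l₂) = tshW l₁ l₂ := by
  rw [tshH, wd, wd, MonoidAlgebra.of_apply, MonoidAlgebra.of_apply,
    MonoidAlgebra.coeff_single, MonoidAlgebra.coeff_single]
  rw [Finsupp.sum_single_index (by simp), Finsupp.sum_single_index (by simp)]
  simp [FreeMonoid.toList_ofList]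

lemma δw_nil : δw ([] : List (Fin 2)) = 1 := rfl
lemma δw_YY_succ (m : ℕ) : δw (YY (m+1)) = 0 := rfl
lemma ρt_zero : ρt 0 = 0 := rfl
lemma ρt_one : ρt 1 = (Polynomial.X : Rt) • wx := rfl


/-- Closed form for `tshW (y^{a+1}) (y^{b+1})`. -/
def FFx (a b : ℕ) : Ht :=
  (((a+b+2).choose (a+1) : ℕ) : Rt) • wd (YY (a+b+2))
  - (Polynomial.X : Rt) • ∑ s ∈ Finset.range (b+1),
      (((a+s).choose s : ℕ) : Rt) • wd (YY (a+s) ++ 0 :: YY (b+1-s))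
  - (Polynomial.X : Rt) • ∑ s ∈ Finset.range (a+1),
      (((b+s).choose s : ℕ) : Rt) • wd (YY (b+s) ++ 0 :: YY (a+1-s))

lemma FFx_symm (a b : ℕ) : FFx a b = FFx b a := by
  simp only [FFx]
  rw [show a+b+2 = b+a+2 by ring,
    show (b+a+2).choose (a+1) = (b+a+2).choose (b+1) by
      rw [show b+a+2 = (a+1)+(b+1) by ring, Nat.choose_symm_add,
        show (a+1)+(b+1) = (b+1)+(a+1) by ring, Nat.choose_symm_add],
    sub_sub, sub_sub]
  abel

lemma tshW_YY_rec (a b : ℕ) :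
    tshW (YY (a+2)) (YY (b+2)) =
      wd [1] * tshW (YY (a+1)) (YY (b+2)) + wd [1] * tshW (YY (a+2)) (YY (b+1)) := by
  rw [YY_succ (a+1), YY_succ (b+1), tshW_cons]
  simp [δw_YY_succ, ← YY_succ]

lemma tshW_YY_rec_left (b : ℕ) :
    tshW (YY 1) (YY (b+2)) =
      wd [1] * wd (YY (b+2)) + wd [1] * tshW (YY 1) (YY (b+1))
        - (Polynomial.X : Rt) • (wx * wd (YY (b+2))) := by
  rw [show (YY 1) = [(1 : Fin 2)] from rfl, YY_succ (b+1), tshW_cons]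
  simp [show δw ([] : List (Fin 2)) = 1 from rfl, δw_YY_succ, ρt_one, tshW_nil_left,
    ← YY_succ, smul_mul_assoc]

lemma tshW_YY_base : tshW (YY 1) (YY 1) =
    wd [1] * wd (YY 1) + wd [1] * wd (YY 1)
      - (Polynomial.X : Rt) • (wx * wd (YY 1)) - (Polynomial.X : Rt) • (wx * wd (YY 1)) := by
  rw [show (YY 1) = [(1 : Fin 2)] from rfl, tshW_cons]
  simp [show δw ([] : List (Fin 2)) = 1 from rfl, ρt_one, tshW_nil_left, tshW_nil_right,
    smul_mul_assoc]

lemma L1 (a b : ℕ) :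
    (((a+b+3).choose (a+1) : ℕ) : Rt) • wd (YY (a+b+4))
      + (((a+b+3).choose (a+2) : ℕ) : Rt) • wd (YY (a+b+4))
    = (((a+b+4).choose (a+2) : ℕ) : Rt) • wd (YY (a+b+4)) := by
  rw [← add_smul]
  congr 1
  norm_cast

lemma L2 (a b : ℕ) :
    (∑ s ∈ Finset.range (b+2),
      (((a+s).choose s : ℕ) : Rt) • wd (1 :: (YY (a+s) ++ 0 :: YY (b+2-s))))
    + (∑ s ∈ Finset.range (b+1),
      (((a+1+s).choose s : ℕ) : Rt) • wd (1 :: (YY (a+1+s) ++ 0 :: YY (b+1-s))))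
    = ∑ s ∈ Finset.range (b+2),
      (((a+1+s).choose s : ℕ) : Rt) • wd (YY (a+1+s) ++ 0 :: YY (b+2-s)) := by
  have key : ∀ (m q : ℕ) (c : Rt), c • wd (1 :: (YY m ++ 0 :: YY q)) = c • wd (YY (m+1) ++ 0 :: YY q) := by
    intro m q c; rw [← List.cons_append, ← YY_succ]
  rw [Finset.sum_range_succ' _ (b+1), Finset.sum_range_succ' _ (b+1), add_right_comm]
  congr 1
  · rw [← Finset.sum_add_distrib]
    refine Finset.sum_congr rfl fun s hs => ?_
    rw [key, key, show a+(s+1)+1 = a+1+(s+1) by ring, show b+2-(s+1) = b+1-s by omega,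
      show a+1+s+1 = a+1+(s+1) by ring, ← add_smul]
    congr 1
    norm_cast
    rw [show a+1+(s+1) = (a+1+s)+1 by ring, Nat.choose_succ_succ,
      show a+(s+1) = a+1+s by ring]
    ring
  · rw [key, show a+0+1 = a+1+0 by ring, show b+2-0 = b+2 by rfl]
    norm_num

lemma FFx_step (a b : ℕ) :
    wd [1] * FFx a (b+1) + wd [1] * FFx (a+1) b = FFx (a+1) (b+1) := by
  simp only [FFx, mul_sub, mul_smul_comm, Finset.mul_sum, ← wd_cons, ← YY_succ]
  simp only [show ∀ x : ℕ, x+1+1 = x+2 from fun _ => rfl]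
  rw [show a+(b+1)+2+1 = a+b+4 by ring, show a+(b+1)+2 = a+b+3 by ring,
    show a+1+b+2+1 = a+b+4 by ring, show a+1+b+2 = a+b+3 by ring,
    show a+1+(b+1)+2 = a+b+4 by ring]
  rw [← L1 a b, ← L2 a b, ← L2 b a, smul_add, smul_add]
  abel

lemma FFx_step_left (b : ℕ) :
    wd [1] * wd (YY (b+2)) + wd [1] * FFx 0 b - (Polynomial.X : Rt) • (wx * wd (YY (b+2)))
      = FFx 0 (b+1) := by
  simp only [FFx, Finset.sum_range_one, Nat.choose_self, Nat.cast_one, one_smul,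
    Nat.choose_one_right, Nat.choose_zero_right, Nat.sub_zero,
    Nat.zero_add, zero_add, Nat.add_zero, add_zero,
    mul_sub, mul_smul_comm, Finset.mul_sum, ← wd_cons, ← YY_succ, YY_cons_append]
  simp only [show ∀ x : ℕ, x+1+1 = x+2 from fun _ => rfl, show (0:ℕ)+1 = 1 from rfl]
  rw [show b+2+1 = b+3 by ring]
  rw [Finset.sum_range_succ' (fun s => wd (YY s ++ 0 :: YY (b+2-s))) (b+1)]
  have h3 : ∀ s ∈ Finset.range (b+1), wd (YY (s+1) ++ 0 :: YY (b+2-(s+1)))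
      = wd (YY (s+1) ++ 0 :: YY (b+1-s)) := by
    intro s _
    have e : b+2-(s+1) = b+1-s := by omega
    rw [e]
  rw [Finset.sum_congr rfl h3]
  have h4 : wd (YY 0 ++ 0 :: YY (b+2-0)) = wx * wd (YY (b+2)) := by
    rw [show YY 0 ++ 0 :: YY (b+2-0) = 0 :: YY (b+2) from rfl, wd_cons]; rfl
  rw [h4]
  have h5 : ((b+3 : ℕ) : Rt) • wd (YY (b+3)) = wd (YY (b+3)) + ((b+2:ℕ) : Rt) • wd (YY (b+3)) := by
    rw [show ((b+3:ℕ):Rt) = 1 + ((b+2:ℕ):Rt) by push_cast; ring, add_smul, one_smul]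
  rw [h5, smul_add]
  abel

lemma tshW_YY_left (b : ℕ) : tshW (YY 1) (YY (b+1)) = FFx 0 b := by
  induction b with
  | zero =>
    rw [tshW_YY_base]
    simp only [FFx, Finset.sum_range_one, Nat.choose_self, Nat.choose_one_right,
      Nat.zero_add, zero_add, Nat.add_zero, add_zero, Nat.cast_one, one_smul]
    have e1 : wd [1] * wd (YY 1) = wd (YY 2) := by rw [← wd_cons]; rfl
    rw [e1]
    have e2 : wd (YY 0 ++ 0 :: YY 1) = wx * wd (YY 1) := by
      rw [show YY 0 ++ 0 :: YY 1 = 0 :: YY 1 from rfl, wd_cons]; rfl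
    rw [e2]
    have e3 : ((2 : ℕ) : Rt) • wd (YY 2) = wd (YY 2) + wd (YY 2) := by
      norm_num [two_smul]
    rw [e3]
  | succ b ih =>
    rw [tshW_YY_rec_left, ih, FFx_step_left]

lemma tshW_YY_eq_aux (n : ℕ) : ∀ a b, a + b = n → tshW (YY (a+1)) (YY (b+1)) = FFx a b := by
  induction n using Nat.strong_induction_on with
  | _ n ih =>
    rintro a b rfl
    match a, b with
    | 0, b => exact tshW_YY_left b
    | (a+1), 0 =>
      rw [tshW_comm]
      rw [show tshW (YY (0+1)) (YY (a+1+1)) = tshW (YY 1) (YY ((a+1)+1)) from rfl]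
      rw [tshW_YY_left (a+1), FFx_symm]
    | (a+1), (b+1) =>
      have h1 := ih (a+(b+1)) (by omega) a (b+1) rfl
      have h2 := ih ((a+1)+b) (by omega) (a+1) b rfl
      rw [show b+1+1 = b+2 from rfl] at h1
      rw [show a+1+1 = a+2 from rfl] at h2
      rw [show a+1+1 = a+2 from rfl, show b+1+1 = b+2 from rfl, tshW_YY_rec, h1, h2, FFx_step]

lemma tshW_YY_eq (a b : ℕ) : tshW (YY (a+1)) (YY (b+1)) = FFx a b :=
  tshW_YY_eq_aux (a+b) a b rfl

/-- Closed form for `tshW (y^{a+1}) (x y^{b+1})`. -/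
def GGx (a b : ℕ) : Ht :=
  wd (YY (a+1) ++ 0 :: YY (b+1))
  + ∑ i ∈ Finset.range (a+1), wd (YY i ++ [0]) * FFx (a-i) b
  - (Polynomial.X : Rt) • wd (YY a ++ 0 :: 0 :: YY (b+1))

lemma tshW_Y0_rec (a b : ℕ) :
    tshW (YY (a+2)) (0 :: YY (b+1)) =
      wd [1] * tshW (YY (a+1)) (0 :: YY (b+1)) + wd [0] * tshW (YY (a+2)) (YY (b+1)) := by
  rw [YY_succ (a+1), tshW_cons]
  simp [δw_YY_succ, ρt_zero, ← YY_succ]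

lemma tshW_Y0_base (b : ℕ) :
    tshW (YY 1) (0 :: YY (b+1)) =
      wd [1] * wd (0 :: YY (b+1)) + wd [0] * tshW (YY 1) (YY (b+1))
        - (Polynomial.X : Rt) • (wx * wd (0 :: YY (b+1))) := by
  rw [show YY 1 = [(1 : Fin 2)] from rfl, tshW_cons]
  simp [show δw ([] : List (Fin 2)) = 1 from rfl, δw_YY_succ, ρt_one, ρt_zero,
    tshW_nil_left, smul_mul_assoc]

lemma tshW_G (a b : ℕ) : tshW (YY (a+1)) (0 :: YY (b+1)) = GGx a b := by
  induction a with
  | zero =>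
    rw [tshW_Y0_base, show tshW (YY 1) (YY (b+1)) = tshW (YY (0+1)) (YY (b+1)) from rfl,
      tshW_YY_eq 0 b]
    simp only [GGx, zero_add, Finset.sum_range_one, Nat.sub_self, Nat.sub_zero]
    rw [show wd [1] * wd (0 :: YY (b+1)) = wd (YY 1 ++ 0 :: YY (b+1)) from by
        rw [← wd_cons]; rfl,
      show wd (YY 0 ++ [0]) = wd [0] from rfl,
      show wx * wd (0 :: YY (b+1)) = wd (YY 0 ++ 0 :: 0 :: YY (b+1)) from by
        rw [wx, ← wd_cons]; rfl]
  | succ a ih =>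
    rw [tshW_Y0_rec, ih, tshW_YY_eq (a+1) b]
    simp only [GGx, mul_add, mul_sub, Finset.mul_sum, mul_smul_comm, ← mul_assoc,
      ← wd_cons, YY_cons_append]
    rw [Finset.sum_range_succ' (fun i => wd (YY i ++ [0]) * FFx (a+1-i) b) (a+1)]
    have h1 : ∀ i ∈ Finset.range (a+1),
        wd (YY (i+1) ++ [0]) * FFx (a+1-(i+1)) b = wd (YY (i+1) ++ [0]) * FFx (a-i) b := by
      intro i _
      have e : a+1-(i+1) = a-i := by omega
      rw [e]
    rw [Finset.sum_congr rfl h1,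
      show wd (YY 0 ++ [0]) * FFx (a+1-0) b = wd [0] * FFx (a+1) b from rfl]
    abel

lemma tshW_main (a b : ℕ) :
    tshW (0 :: YY (a+1)) (0 :: YY (b+1)) = wd [0] * GGx a b + wd [0] * GGx b a := by
  rw [tshW_cons]
  simp only [δw_YY_succ, ρt_zero, zero_smul, zero_mul, smul_zero, sub_zero]
  rw [tshW_G a b, tshW_comm (0 :: YY (a+1)) (YY (b+1)), tshW_G b a]

lemma wmul2 (i m : ℕ) : wd (0 :: (YY i ++ [0])) * wd (YY m) = wd (W2 i m) := by
  rw [← wd_append]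
  congr 1
  simp [W2]

lemma wmul3 (i p q : ℕ) :
    wd (0 :: (YY i ++ [0])) * wd (YY p ++ 0 :: YY q) = wd (W3 i p q) := by
  rw [← wd_append]
  congr 1
  simp [W3]

lemma word_mul_FFx (i c b : ℕ) : wd (0 :: (YY i ++ [0])) * FFx c b =
    (((c+b+2).choose (c+1) : ℕ) : Rt) • wd (W2 i (c+b+2))
    - (Polynomial.X : Rt) • ∑ s ∈ Finset.range (b+1),
        (((c+s).choose s : ℕ) : Rt) • wd (W3 i (c+s) (b+1-s))
    - (Polynomial.X : Rt) • ∑ s ∈ Finset.range (c+1),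
        (((b+s).choose s : ℕ) : Rt) • wd (W3 i (b+s) (c+1-s)) := by
  simp only [FFx, mul_sub, mul_smul_comm, Finset.mul_sum, wmul2, wmul3]

lemma expand_GG (a b : ℕ) : wd [0] * GGx a b =
    wd (W2 (a+1) (b+1))
    + (∑ i ∈ Finset.range (a+1), (((a-i+b+2).choose (a-i+1) : ℕ) : Rt) • wd (W2 i (a-i+b+2)))
    - (Polynomial.X : Rt) • (∑ i ∈ Finset.range (a+1), ∑ s ∈ Finset.range (b+1),
        (((a-i+s).choose s : ℕ) : Rt) • wd (W3 i (a-i+s) (b+1-s)))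
    - (Polynomial.X : Rt) • (∑ i ∈ Finset.range (a+1), ∑ s ∈ Finset.range (a-i+1),
        (((b+s).choose s : ℕ) : Rt) • wd (W3 i (b+s) (a-i+1-s)))
    - (Polynomial.X : Rt) • wd (W3 a 0 (b+1)) := by
  rw [GGx, mul_sub, mul_add, Finset.mul_sum]
  have h1 : wd [0] * wd (YY (a+1) ++ 0 :: YY (b+1)) = wd (W2 (a+1) (b+1)) := by
    rw [← wd_cons]; rfl
  have h2 : wd [0] * ((Polynomial.X : Rt) • wd (YY a ++ 0 :: 0 :: YY (b+1)))
      = (Polynomial.X : Rt) • wd (W3 a 0 (b+1)) := by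
    rw [mul_smul_comm, ← wd_cons]
    rfl
  have h3 : ∀ i ∈ Finset.range (a+1),
      wd [0] * (wd (YY i ++ [0]) * FFx (a-i) b) =
        (((a-i+b+2).choose (a-i+1) : ℕ) : Rt) • wd (W2 i (a-i+b+2))
        - (Polynomial.X : Rt) • ∑ s ∈ Finset.range (b+1),
            (((a-i+s).choose s : ℕ) : Rt) • wd (W3 i (a-i+s) (b+1-s))
        - (Polynomial.X : Rt) • ∑ s ∈ Finset.range (a-i+1),
            (((b+s).choose s : ℕ) : Rt) • wd (W3 i (b+s) (a-i+1-s)) := by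
    intro i _
    rw [← mul_assoc, ← wd_cons, word_mul_FFx]
  rw [Finset.sum_congr rfl h3, h1, h2]
  rw [Finset.sum_sub_distrib, Finset.sum_sub_distrib, ← Finset.smul_sum, ← Finset.smul_sum]
  abel

section SumTools

variable {M : Type*} [AddCommMonoid M]

lemma sum_tri_swap (n : ℕ) (f : ℕ → ℕ → M) :
    ∑ a ∈ Finset.range n, ∑ i ∈ Finset.range (a+1), f a i
      = ∑ i ∈ Finset.range n, ∑ a ∈ Finset.range n, (if i ≤ a then f a i else 0) := by
  have h : ∀ a ∈ Finset.range n,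
      ∑ i ∈ Finset.range (a+1), f a i = ∑ i ∈ Finset.range n, if i ≤ a then f a i else 0 := by
    intro a ha
    rw [Finset.sum_ite, Finset.sum_const_zero, add_zero]
    apply Finset.sum_congr _ fun _ _ => rfl
    ext i
    simp only [Finset.mem_filter, Finset.mem_range]
    have := Finset.mem_range.mp ha
    omega
  rw [Finset.sum_congr rfl h, Finset.sum_comm]

lemma sum_shift (m d M' : ℕ) (h : d + m = M') (f : ℕ → M) :
    ∑ s ∈ Finset.range m, f (d + s)
      = ∑ p ∈ Finset.range M', if d ≤ p then f p else 0 := by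
  subst h
  rw [Finset.sum_ite, Finset.sum_const_zero, add_zero]
  have e : Finset.filter (fun p => d ≤ p) (Finset.range (d+m)) = Finset.Ico d (d+m) := by
    ext p
    simp only [Finset.mem_filter, Finset.mem_range, Finset.mem_Ico]
    omega
  rw [e, Finset.sum_Ico_eq_sum_range]
  apply Finset.sum_congr _ fun _ _ => rfl
  congr 1
  omega

lemma ite_sum (P : Prop) [Decidable P] (s : Finset ℕ) (f : ℕ → M) :
    (if P then ∑ x ∈ s, f x else 0) = ∑ x ∈ s, (if P then f x else 0) := by
  split <;> simp

end SumTools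

section Scalars

lemma partial_alt (m : ℕ) : ∀ j, ∑ e ∈ Finset.range (j+1), (-1:Rt)^e * ((m+1).choose e : ℕ)
    = (-1)^j * (m.choose j : ℕ) := by
  intro j
  induction j with
  | zero => simp
  | succ j ih =>
    rw [Finset.sum_range_succ, ih, show m+1 = m+1 from rfl, Nat.choose_succ_succ m j]
    push_cast
    ring

lemma alt_sum_choose (p : ℕ) :
    ∑ d ∈ Finset.range (p+1), (-1 : Rt)^d * (p.choose d : ℕ) = if p = 0 then 1 else 0 := by
  match p with
  | 0 => simp
  | (m+1) =>
    rw [partial_alt m (m+1), Nat.choose_succ_self]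
    simp

lemma alt_sum_choose_succ (m : ℕ) :
    ∑ d ∈ Finset.range (m+1), (-1:Rt)^d * ((m+1+1).choose (d+1) : ℕ) = 1 + (-1)^m := by
  have hp := partial_alt (m+1) (m+1)
  rw [Finset.sum_range_succ' _ (m+1)] at hp
  rw [Nat.choose_self] at hp
  have e : ∀ d ∈ Finset.range (m+1),
      (-1:Rt)^(d+1) * ((m+1+1).choose (d+1) : ℕ)
        = -((-1)^d * ((m+1+1).choose (d+1) : ℕ)) := by
    intro d _
    rw [pow_succ]
    ring
  rw [Finset.sum_congr rfl e, Finset.sum_neg_distrib] at hp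
  simp only [pow_zero, one_mul, Nat.choose_zero_right, Nat.cast_one] at hp
  linear_combination -hp

lemma neg_one_pow_sub (k j : ℕ) (hk : Even k) (hj : j ≤ k) : (-1:Rt)^(k-j) = (-1)^j := by
  have h1 : (-1:Rt)^(k-j) * (-1)^j = 1 := by
    rw [← pow_add, Nat.sub_add_cancel hj, hk.neg_one_pow]
  have h2 : ((-1:Rt)^j) * (-1)^j = 1 := by
    rw [← pow_add, ← two_mul, pow_mul]
    norm_num
  calc (-1:Rt)^(k-j) = (-1)^(k-j) * ((-1)^j * (-1)^j) := by rw [h2, mul_one]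
    _ = ((-1)^(k-j) * (-1)^j) * (-1)^j := by ring
    _ = (-1)^j := by rw [h1, one_mul]

lemma neg_one_sq' (i : ℕ) : ((-1:Rt)^i) * (-1)^i = 1 := by
  rw [← pow_add, ← two_mul, pow_mul]
  norm_num

lemma S2coef (k i : ℕ) (hk : Even k) (hi : i ≤ k) :
    ∑ a ∈ Finset.range (k+1),
        (if i ≤ a then (-1:Rt)^a * (((k-i+2).choose (a-i+1) : ℕ) : Rt) else 0)
      = (-1)^i + 1 := by
  rw [Finset.sum_ite, Finset.sum_const_zero, add_zero]
  have e : Finset.filter (fun a => i ≤ a) (Finset.range (k+1)) = Finset.Ico i (k+1) := by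
    ext a
    simp only [Finset.mem_filter, Finset.mem_range, Finset.mem_Ico]
    omega
  rw [e, Finset.sum_Ico_eq_sum_range, show k+1-i = (k-i)+1 by omega]
  have e2 : ∀ d ∈ Finset.range ((k-i)+1),
      (-1:Rt)^(i+d) * (((k-i+2).choose ((i+d)-i+1) : ℕ) : Rt)
        = (-1)^i * ((-1)^d * (((k-i)+1+1).choose (d+1) : ℕ)) := by
    intro d _
    rw [show (i+d)-i+1 = d+1 by omega, show k-i+2 = (k-i)+1+1 by omega, pow_add]
    ring
  rw [Finset.sum_congr rfl e2, ← Finset.mul_sum, alt_sum_choose_succ (k-i),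
    neg_one_pow_sub k i hk hi, mul_add, mul_one, neg_one_sq', add_comm]

lemma C1coef (k i p : ℕ) (hi : i ≤ k) (hp : p ≤ k - i) :
    ∑ a ∈ Finset.range (k+1),
        (if i ≤ a then (-1:Rt)^a * (if a-i ≤ p then ((p.choose (p-(a-i)) : ℕ) : Rt) else 0) else 0)
      = (-1)^i * (if p = 0 then 1 else 0) := by
  have e0 : ∀ a ∈ Finset.range (k+1),
      (if i ≤ a then (-1:Rt)^a * (if a-i ≤ p then ((p.choose (p-(a-i)) : ℕ) : Rt) else 0) else 0)
        = (if i ≤ a ∧ a ≤ i+p then (-1:Rt)^a * ((p.choose (p-(a-i)) : ℕ) : Rt) else 0) := by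
    intro a _
    by_cases h1 : i ≤ a
    · by_cases h2 : a - i ≤ p
      · rw [if_pos h1, if_pos h2, if_pos (by omega : i ≤ a ∧ a ≤ i+p)]
      · rw [if_pos h1, if_neg h2, if_neg (by omega : ¬(i ≤ a ∧ a ≤ i+p)), mul_zero]
    · rw [if_neg h1, if_neg (by omega : ¬(i ≤ a ∧ a ≤ i+p))]
  rw [Finset.sum_congr rfl e0, Finset.sum_ite, Finset.sum_const_zero, add_zero]
  have e : Finset.filter (fun a => i ≤ a ∧ a ≤ i+p) (Finset.range (k+1))
      = Finset.Ico i (i+p+1) := by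
    ext a
    simp only [Finset.mem_filter, Finset.mem_range, Finset.mem_Ico]
    omega
  rw [e, Finset.sum_Ico_eq_sum_range, show i+p+1-i = p+1 by omega]
  have e2 : ∀ d ∈ Finset.range (p+1),
      (-1:Rt)^(i+d) * ((p.choose (p-((i+d)-i)) : ℕ) : Rt)
        = (-1)^i * ((-1)^d * (p.choose d : ℕ)) := by
    intro d hd
    have hdp : d ≤ p := by simpa [Nat.lt_succ_iff] using Finset.mem_range.mp hd
    rw [show (i+d)-i = d by omega, Nat.choose_symm hdp, pow_add]
    ring
  rw [Finset.sum_congr rfl e2, ← Finset.mul_sum, alt_sum_choose p]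

lemma C2coef (k i p : ℕ) (hk : Even k) (hi : i ≤ k) (hp : p ≤ k - i) :
    ∑ a ∈ Finset.range (k+1),
        (if i ≤ a then (-1:Rt)^a * (if k-a ≤ p then ((p.choose (p-(k-a)) : ℕ) : Rt) else 0) else 0)
      = (if p = 0 then 1 else 0) := by
  have e0 : ∀ a ∈ Finset.range (k+1),
      (if i ≤ a then (-1:Rt)^a * (if k-a ≤ p then ((p.choose (p-(k-a)) : ℕ) : Rt) else 0) else 0)
        = (if k-p ≤ a then (-1:Rt)^a * ((p.choose (p-(k-a)) : ℕ) : Rt) else 0) := by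
    intro a ha
    have hak := Finset.mem_range.mp ha
    by_cases h1 : i ≤ a
    · by_cases h2 : k - a ≤ p
      · rw [if_pos h1, if_pos h2, if_pos (by omega : k-p ≤ a)]
      · rw [if_pos h1, if_neg h2, if_neg (by omega : ¬(k-p ≤ a)), mul_zero]
    · rw [if_neg h1, if_neg (by omega : ¬(k-p ≤ a))]
  rw [Finset.sum_congr rfl e0, Finset.sum_ite, Finset.sum_const_zero, add_zero]
  have e : Finset.filter (fun a => k-p ≤ a) (Finset.range (k+1)) = Finset.Ico (k-p) (k+1) := by
    ext a
    simp only [Finset.mem_filter, Finset.mem_range, Finset.mem_Ico]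
    omega
  rw [e, Finset.sum_Ico_eq_sum_range, show k+1-(k-p) = p+1 by omega]
  have e2 : ∀ d ∈ Finset.range (p+1),
      (-1:Rt)^((k-p)+d) * ((p.choose (p-(k-((k-p)+d))) : ℕ) : Rt)
        = (-1)^(k-p) * ((-1)^d * (p.choose d : ℕ)) := by
    intro d hd
    have hdp : d ≤ p := by simpa [Nat.lt_succ_iff] using Finset.mem_range.mp hd
    have hpk : p ≤ k := by omega
    rw [show p-(k-((k-p)+d)) = d by omega, pow_add]
    ring
  rw [Finset.sum_congr rfl e2, ← Finset.mul_sum, alt_sum_choose p,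
    neg_one_pow_sub k p hk (by omega)]
  split_ifs with h
  · subst h; simp
  · simp

end Scalars

lemma T2eq (k : ℕ) (hk : Even k) :
    ∑ a ∈ Finset.range (k+1), (-1:Rt)^a •
        (∑ i ∈ Finset.range (a+1),
          (((a-i+(k-a)+2).choose (a-i+1) : ℕ) : Rt) • wd (W2 i (a-i+(k-a)+2)))
      = ∑ i ∈ Finset.range (k+1), ((-1:Rt)^i + 1) • wd (W2 i (k-i+2)) := by
  have h1 : ∀ a ∈ Finset.range (k+1),
      (-1:Rt)^a • (∑ i ∈ Finset.range (a+1),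
          (((a-i+(k-a)+2).choose (a-i+1) : ℕ) : Rt) • wd (W2 i (a-i+(k-a)+2)))
        = ∑ i ∈ Finset.range (a+1),
            ((-1:Rt)^a * (((k-i+2).choose (a-i+1) : ℕ) : Rt)) • wd (W2 i (k-i+2)) := by
    intro a ha
    have hak : a ≤ k := by
      have := Finset.mem_range.mp ha; omega
    rw [Finset.smul_sum]
    refine Finset.sum_congr rfl fun i hi => ?_
    have hia : i ≤ a := by
      have := Finset.mem_range.mp hi; omega
    rw [show a-i+(k-a)+2 = k-i+2 by omega, smul_smul]
  rw [Finset.sum_congr rfl h1,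
    sum_tri_swap (k+1) (fun a i => ((-1:Rt)^a * (((k-i+2).choose (a-i+1) : ℕ) : Rt)) • wd (W2 i (k-i+2)))]
  refine Finset.sum_congr rfl fun i hi => ?_
  have hik : i ≤ k := by
    have := Finset.mem_range.mp hi; omega
  have h2 : ∀ a ∈ Finset.range (k+1),
      (if i ≤ a then ((-1:Rt)^a * (((k-i+2).choose (a-i+1) : ℕ) : Rt)) • wd (W2 i (k-i+2)) else 0)
        = (if i ≤ a then (-1:Rt)^a * (((k-i+2).choose (a-i+1) : ℕ) : Rt) else 0) • wd (W2 i (k-i+2)) := by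
    intro a _
    split <;> simp
  rw [Finset.sum_congr rfl h2, ← Finset.sum_smul, S2coef k i hk hik]

lemma partI (k : ℕ) (hk : Even k) :
    (∑ j ∈ Finset.range (k+1), (-1:Rt)^j • wd (W2 (j+1) (k-j+1)))
      + ∑ i ∈ Finset.range (k+1), ((-1:Rt)^i + 1) • wd (W2 i (k-i+2))
    = (2:Rt) • wd (W2 0 (k+2)) + ∑ j ∈ Finset.range (k+1), wd (W2 (j+1) (k-j+1)) := by
  rw [Finset.sum_range_succ' (fun i => ((-1:Rt)^i + 1) • wd (W2 i (k-i+2))) k]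
  rw [Finset.sum_range_succ (fun j => (-1:Rt)^j • wd (W2 (j+1) (k-j+1))) k]
  rw [Finset.sum_range_succ (fun j => wd (W2 (j+1) (k-j+1))) k]
  rw [show ((-1:Rt)^0 + 1) = 2 by norm_num, show k-0+2 = k+2 by omega,
    hk.neg_one_pow, one_smul]
  have h : ∀ i ∈ Finset.range k,
      ((-1:Rt)^(i+1) + 1) • wd (W2 (i+1) (k-(i+1)+2))
        = wd (W2 (i+1) (k-i+1)) - (-1:Rt)^i • wd (W2 (i+1) (k-i+1)) := by
    intro i hi
    have hik := Finset.mem_range.mp hi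
    rw [show k-(i+1)+2 = k-i+1 by omega,
      show ((-1:Rt)^(i+1) + 1) = 1 - (-1:Rt)^i by rw [pow_succ]; ring,
      sub_smul, one_smul]
  rw [Finset.sum_congr rfl h, Finset.sum_sub_distrib]
  abel

lemma inner_can (k i m d : ℕ) (hdm : d + m = k+1-i) :
    ∑ s ∈ Finset.range m, (((d+s).choose s : ℕ) : Rt) • wd (W3 i (d+s) (m-s))
      = ∑ p ∈ Finset.range (k+1-i),
          (if d ≤ p then (((p.choose (p-d) : ℕ)) : Rt) • wd (W3 i p (k+1-i-p)) else 0) := by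
  have e1 : ∀ s ∈ Finset.range m,
      (((d+s).choose s : ℕ) : Rt) • wd (W3 i (d+s) (m-s))
        = (fun p => (((p.choose (p-d) : ℕ)) : Rt) • wd (W3 i p (k+1-i-p))) (d+s) := by
    intro s hs
    have hsm : s < m := Finset.mem_range.mp hs
    simp only
    rw [show (d+s)-d = s by omega, show k+1-i-(d+s) = m-s by omega]
  rw [Finset.sum_congr rfl e1,
    sum_shift m d (k+1-i) hdm (fun p => (((p.choose (p-d) : ℕ)) : Rt) • wd (W3 i p (k+1-i-p)))]

lemma P1can (k : ℕ) (hk : Even k) :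
    ∑ a ∈ Finset.range (k+1), (-1:Rt)^a •
        ∑ i ∈ Finset.range (a+1), ∑ s ∈ Finset.range (k-a+1),
          (((a-i+s).choose s : ℕ) : Rt) • wd (W3 i (a-i+s) (k-a+1-s))
      = ∑ i ∈ Finset.range (k+1), ∑ p ∈ Finset.range (k+1-i),
          ((-1:Rt)^i * (if p = 0 then 1 else 0)) • wd (W3 i p (k+1-i-p)) := by
  have h1 : ∀ a ∈ Finset.range (k+1),
      ((-1:Rt)^a • ∑ i ∈ Finset.range (a+1), ∑ s ∈ Finset.range (k-a+1),
          (((a-i+s).choose s : ℕ) : Rt) • wd (W3 i (a-i+s) (k-a+1-s)))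
        = ∑ i ∈ Finset.range (a+1), ∑ p ∈ Finset.range (k+1-i),
            (if a-i ≤ p then
              ((-1:Rt)^a * ((p.choose (p-(a-i)) : ℕ) : Rt)) • wd (W3 i p (k+1-i-p)) else 0) := by
    intro a ha
    have hak : a ≤ k := by
      have := Finset.mem_range.mp ha; omega
    rw [Finset.smul_sum]
    refine Finset.sum_congr rfl fun i hi => ?_
    have hia : i ≤ a := by
      have := Finset.mem_range.mp hi; omega
    rw [inner_can k i (k-a+1) (a-i) (by omega), Finset.smul_sum]
    refine Finset.sum_congr rfl fun p hp => ?_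
    split <;> simp [smul_smul]
  rw [Finset.sum_congr rfl h1,
    sum_tri_swap (k+1) (fun a i => ∑ p ∈ Finset.range (k+1-i),
      (if a-i ≤ p then
        ((-1:Rt)^a * ((p.choose (p-(a-i)) : ℕ) : Rt)) • wd (W3 i p (k+1-i-p)) else 0))]
  refine Finset.sum_congr rfl fun i hi => ?_
  have hik : i ≤ k := by
    have := Finset.mem_range.mp hi; omega
  rw [Finset.sum_congr rfl (fun a _ => ite_sum (i ≤ a) (Finset.range (k+1-i)) _),
    Finset.sum_comm]
  refine Finset.sum_congr rfl fun p hp => ?_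
  have hpk : p ≤ k - i := by
    have := Finset.mem_range.mp hp; omega
  have h2 : ∀ a ∈ Finset.range (k+1),
      (if i ≤ a then
        (if a-i ≤ p then
          ((-1:Rt)^a * ((p.choose (p-(a-i)) : ℕ) : Rt)) • wd (W3 i p (k+1-i-p)) else 0) else 0)
        = (if i ≤ a then
            (-1:Rt)^a * (if a-i ≤ p then ((p.choose (p-(a-i)) : ℕ) : Rt) else 0) else 0)
          • wd (W3 i p (k+1-i-p)) := by
    intro a _
    split_ifs <;> simp
  rw [Finset.sum_congr rfl h2, ← Finset.sum_smul, C1coef k i p hik hpk]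

lemma P2can (k : ℕ) (hk : Even k) :
    ∑ a ∈ Finset.range (k+1), (-1:Rt)^a •
        ∑ i ∈ Finset.range (a+1), ∑ s ∈ Finset.range (a-i+1),
          (((k-a+s).choose s : ℕ) : Rt) • wd (W3 i (k-a+s) (a-i+1-s))
      = ∑ i ∈ Finset.range (k+1), ∑ p ∈ Finset.range (k+1-i),
          ((if p = 0 then (1:Rt) else 0)) • wd (W3 i p (k+1-i-p)) := by
  have h1 : ∀ a ∈ Finset.range (k+1),
      ((-1:Rt)^a • ∑ i ∈ Finset.range (a+1), ∑ s ∈ Finset.range (a-i+1),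
          (((k-a+s).choose s : ℕ) : Rt) • wd (W3 i (k-a+s) (a-i+1-s)))
        = ∑ i ∈ Finset.range (a+1), ∑ p ∈ Finset.range (k+1-i),
            (if k-a ≤ p then
              ((-1:Rt)^a * ((p.choose (p-(k-a)) : ℕ) : Rt)) • wd (W3 i p (k+1-i-p)) else 0) := by
    intro a ha
    have hak : a ≤ k := by
      have := Finset.mem_range.mp ha; omega
    rw [Finset.smul_sum]
    refine Finset.sum_congr rfl fun i hi => ?_
    have hia : i ≤ a := by
      have := Finset.mem_range.mp hi; omega
    rw [inner_can k i (a-i+1) (k-a) (by omega), Finset.smul_sum]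
    refine Finset.sum_congr rfl fun p hp => ?_
    split <;> simp [smul_smul]
  rw [Finset.sum_congr rfl h1,
    sum_tri_swap (k+1) (fun a i => ∑ p ∈ Finset.range (k+1-i),
      (if k-a ≤ p then
        ((-1:Rt)^a * ((p.choose (p-(k-a)) : ℕ) : Rt)) • wd (W3 i p (k+1-i-p)) else 0))]
  refine Finset.sum_congr rfl fun i hi => ?_
  have hik : i ≤ k := by
    have := Finset.mem_range.mp hi; omega
  rw [Finset.sum_congr rfl (fun a _ => ite_sum (i ≤ a) (Finset.range (k+1-i)) _),
    Finset.sum_comm]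
  refine Finset.sum_congr rfl fun p hp => ?_
  have hpk : p ≤ k - i := by
    have := Finset.mem_range.mp hp; omega
  have h2 : ∀ a ∈ Finset.range (k+1),
      (if i ≤ a then
        (if k-a ≤ p then
          ((-1:Rt)^a * ((p.choose (p-(k-a)) : ℕ) : Rt)) • wd (W3 i p (k+1-i-p)) else 0) else 0)
        = (if i ≤ a then
            (-1:Rt)^a * (if k-a ≤ p then ((p.choose (p-(k-a)) : ℕ) : Rt) else 0) else 0)
          • wd (W3 i p (k+1-i-p)) := by
    intro a _
    split_ifs <;> simp
  rw [Finset.sum_congr rfl h2, ← Finset.sum_smul, C2coef k i p hk hik hpk]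

lemma partII (k : ℕ) (hk : Even k) :
    (∑ i ∈ Finset.range (k+1), ∑ p ∈ Finset.range (k+1-i),
        ((-1:Rt)^i * (if p = 0 then 1 else 0)) • wd (W3 i p (k+1-i-p)))
    + (∑ i ∈ Finset.range (k+1), ∑ p ∈ Finset.range (k+1-i),
        ((if p = 0 then (1:Rt) else 0)) • wd (W3 i p (k+1-i-p)))
    + ∑ j ∈ Finset.range (k+1), (-1:Rt)^j • wd (W3 j 0 (k-j+1))
    = ∑ i ∈ Finset.range (k+1), (2*(-1:Rt)^i+1) • wd (W3 i 0 (k-i+1)) := by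
  have col1 : ∀ i ∈ Finset.range (k+1),
      (∑ p ∈ Finset.range (k+1-i),
        ((-1:Rt)^i * (if p = 0 then 1 else 0)) • wd (W3 i p (k+1-i-p)))
        = (-1:Rt)^i • wd (W3 i 0 (k-i+1)) := by
    intro i hi
    have hik : i ≤ k := by
      have := Finset.mem_range.mp hi; omega
    have e : ∀ p ∈ Finset.range (k+1-i),
        ((-1:Rt)^i * (if p = 0 then 1 else 0)) • wd (W3 i p (k+1-i-p))
          = (if p = 0 then (-1:Rt)^i • wd (W3 i p (k+1-i-p)) else 0) := by
      intro p _
      split <;> simp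
    rw [Finset.sum_congr rfl e,
      Finset.sum_ite_eq' (Finset.range (k+1-i)) 0
        (fun p => (-1:Rt)^i • wd (W3 i p (k+1-i-p))),
      if_pos (by simp [Finset.mem_range]; omega), show k+1-i-0 = k-i+1 by omega]
  have col2 : ∀ i ∈ Finset.range (k+1),
      (∑ p ∈ Finset.range (k+1-i),
        ((if p = 0 then (1:Rt) else 0)) • wd (W3 i p (k+1-i-p)))
        = wd (W3 i 0 (k-i+1)) := by
    intro i hi
    have hik : i ≤ k := by
      have := Finset.mem_range.mp hi; omega
    have e : ∀ p ∈ Finset.range (k+1-i),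
        ((if p = 0 then (1:Rt) else 0)) • wd (W3 i p (k+1-i-p))
          = (if p = 0 then wd (W3 i p (k+1-i-p)) else 0) := by
      intro p _
      split <;> simp
    rw [Finset.sum_congr rfl e,
      Finset.sum_ite_eq' (Finset.range (k+1-i)) 0 (fun p => wd (W3 i p (k+1-i-p))),
      if_pos (by simp [Finset.mem_range]; omega), show k+1-i-0 = k-i+1 by omega]
  rw [Finset.sum_congr rfl col1, Finset.sum_congr rfl col2,
    ← Finset.sum_add_distrib, ← Finset.sum_add_distrib]
  refine Finset.sum_congr rfl fun i hi => ?_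
  rw [show (2*(-1:Rt)^i+1) = (-1:Rt)^i + 1 + (-1:Rt)^i by ring, add_smul, add_smul, one_smul]

lemma main_sum (k : ℕ) (hk : Even k) :
    ∑ j ∈ Finset.range (k+1), ((-1:Rt)^j) • (wd [0] * GGx j (k-j)) =
      (2:Rt) • wd (W2 0 (k+2))
      + (∑ j ∈ Finset.range (k+1), wd (W2 (j+1) (k-j+1)))
      - (Polynomial.X : Rt) •
          ∑ i ∈ Finset.range (k+1), (2*(-1:Rt)^i+1) • wd (W3 i 0 (k-i+1)) := by
  have h1 : ∀ j ∈ Finset.range (k+1), ((-1:Rt)^j) • (wd [0] * GGx j (k-j)) =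
      (-1:Rt)^j • wd (W2 (j+1) (k-j+1))
      + (-1:Rt)^j • (∑ i ∈ Finset.range (j+1),
          (((j-i+(k-j)+2).choose (j-i+1) : ℕ) : Rt) • wd (W2 i (j-i+(k-j)+2)))
      - (-1:Rt)^j • ((Polynomial.X : Rt) • (∑ i ∈ Finset.range (j+1), ∑ s ∈ Finset.range (k-j+1),
          (((j-i+s).choose s : ℕ) : Rt) • wd (W3 i (j-i+s) (k-j+1-s))))
      - (-1:Rt)^j • ((Polynomial.X : Rt) • (∑ i ∈ Finset.range (j+1), ∑ s ∈ Finset.range (j-i+1),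
          (((k-j+s).choose s : ℕ) : Rt) • wd (W3 i (k-j+s) (j-i+1-s))))
      - (-1:Rt)^j • ((Polynomial.X : Rt) • wd (W3 j 0 (k-j+1))) := by
    intro j hj
    rw [expand_GG j (k-j), smul_sub, smul_sub, smul_sub, smul_add]
  rw [Finset.sum_congr rfl h1,
    Finset.sum_sub_distrib, Finset.sum_sub_distrib, Finset.sum_sub_distrib,
    Finset.sum_add_distrib]
  have hC : ∀ (F : ℕ → Ht),
      (∑ j ∈ Finset.range (k+1), (-1:Rt)^j • ((Polynomial.X : Rt) • F j))
        = (Polynomial.X : Rt) • ∑ j ∈ Finset.range (k+1), (-1:Rt)^j • F j := by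
    intro F
    rw [Finset.smul_sum]
    exact Finset.sum_congr rfl fun j _ => smul_comm _ _ _
  rw [hC, hC, hC, T2eq k hk, P1can k hk, P2can k hk]
  rw [partI k hk]
  have hX : (Polynomial.X : Rt) • (∑ i ∈ Finset.range (k+1), ∑ p ∈ Finset.range (k+1-i),
        ((-1:Rt)^i * (if p = 0 then 1 else 0)) • wd (W3 i p (k+1-i-p)))
      + (Polynomial.X : Rt) • (∑ i ∈ Finset.range (k+1), ∑ p ∈ Finset.range (k+1-i),
        ((if p = 0 then (1:Rt) else 0)) • wd (W3 i p (k+1-i-p)))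
      + (Polynomial.X : Rt) • (∑ j ∈ Finset.range (k+1), (-1:Rt)^j • wd (W3 j 0 (k-j+1)))
      = (Polynomial.X : Rt) •
          ∑ i ∈ Finset.range (k+1), (2*(-1:Rt)^i+1) • wd (W3 i 0 (k-i+1)) := by
    rw [← smul_add, ← smul_add, partII k hk]
  rw [← hX]
  abel

lemma wx_pow (n : ℕ) : wx ^ n = wd (List.replicate n 0) := by
  induction n with
  | zero => simp [wd_nil]
  | succ n ih =>
    rw [pow_succ', ih, wx, ← wd_cons, List.replicate_succ]

lemma zzw_pow (n m : ℕ) : zzw n * wy ^ m = wd (List.replicate (n-1) 0 ++ YY (m+1)) := by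
  rw [zzw, wx_pow, wy_pow, wy, mul_assoc, ← wd_append, ← wd_append]
  rfl

lemma zzw_wd (n : ℕ) : zzw n = wd (List.replicate (n-1) 0 ++ YY 1) := by
  rw [zzw, wx_pow, wy, ← wd_append]
  rfl

lemma zzw_one : zzw 1 = wy := by
  simp [zzw]

lemma zzw2_pow (j : ℕ) : zzw 2 * wy ^ j = wd (0 :: YY (j+1)) := by
  rw [zzw_pow]
  rfl

lemma R1last (k : ℕ) : zzw 3 * wy ^ (k+1) = wd (W2 0 (k+2)) := by
  rw [zzw_pow]
  rfl

lemma R3word (k : ℕ) : zzw 4 * wy ^ k = wd (W3 0 0 (k+1)) := by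
  rw [zzw_pow]
  rfl

lemma R2word (k i : ℕ) (hik : i < k) :
    zzw 2 * wy ^ i * zzw 3 * wy ^ (k-i-1) = wd (W3 (i+1) 0 (k-i)) := by
  rw [zzw2_pow i, zzw_wd 3, wy_pow, ← wd_append, ← wd_append]
  congr 1
  rw [show k-i = (k-i-1)+1 by omega]
  simp [W3, YY, List.replicate_succ]

lemma ofFn_ite_prod {M : Type*} [Monoid M] :
    ∀ (n : ℕ) (j : Fin n) (u v : M),
      (List.ofFn fun j' => if j' = j then u else v).prod
        = v ^ (j:ℕ) * u * v ^ (n - 1 - (j:ℕ)) := by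
  intro n
  induction n with
  | zero => exact fun j => j.elim0
  | succ n ih =>
    intro j u v
    induction j using Fin.cases with
    | zero =>
      rw [List.ofFn_succ, List.prod_cons, if_pos rfl]
      have htail : (List.ofFn fun i : Fin n => if i.succ = (0 : Fin (n+1)) then u else v)
          = List.replicate n v := by
        rw [show (fun i : Fin n => if i.succ = (0 : Fin (n+1)) then u else v) = fun _ => v from
          funext fun i => if_neg (Fin.succ_ne_zero i), List.ofFn_const]
      rw [htail, List.prod_replicate]
      simp
    | succ j' =>
      rw [List.ofFn_succ, List.prod_cons]
      have h0 : (if (0 : Fin (n+1)) = j'.succ then u else v) = v :=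
        if_neg (Fin.succ_ne_zero j').symm
      have htail : (List.ofFn fun i : Fin n => if i.succ = j'.succ then u else v)
          = List.ofFn fun i : Fin n => if i = j' then u else v := by
        congr 1
        funext i
        simp [Fin.succ_inj]
      rw [h0, htail, ih j' u v, Fin.val_succ,
        show (n+1)-1-((j':ℕ)+1) = n-1-(j':ℕ) by omega,
        ← mul_assoc, ← mul_assoc, ← pow_succ']

lemma antidiagTuple_one (n : ℕ) :
    Finset.Nat.antidiagonalTuple n 1
      = Finset.univ.image (fun i : Fin n => Pi.single i 1) := by
  ext a
  simp only [Finset.Nat.mem_antidiagonalTuple, Finset.mem_image, Finset.mem_univ, true_and]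
  constructor
  · intro h
    obtain ⟨i, -, hi⟩ := Finset.exists_ne_zero_of_sum_ne_zero
      (show (∑ j, a j) ≠ 0 by rw [h]; norm_num)
    have h1 : a i = 1 := le_antisymm
      (h ▸ Finset.single_le_sum (fun j _ => Nat.zero_le _) (Finset.mem_univ i))
      (Nat.one_le_iff_ne_zero.mpr hi)
    refine ⟨i, funext fun j => ?_⟩
    by_cases hj : j = i
    · subst hj
      rw [Pi.single_eq_same, h1]
    · rw [Pi.single_eq_of_ne hj]
      by_contra h0
      have h2 : 1 ≤ a j := Nat.one_le_iff_ne_zero.mpr fun hz => h0 hz.symm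
      have h3 : a i + a j ≤ ∑ x, a x := by
        rw [← Finset.sum_pair (show i ≠ j from fun hij => hj hij.symm)]
        exact Finset.sum_le_sum_of_subset (Finset.subset_univ _)
      omega
  · rintro ⟨i, rfl⟩
    simp

lemma R1eq (k : ℕ) :
    (∑ a ∈ Finset.Nat.antidiagonalTuple (k+2) 1,
        ((a (Fin.last (k+1)) + 1 : ℕ) : Rt) •
          (zzw (a (Fin.last (k+1)) + 2) *
            (List.ofFn fun j : Fin (k+1) => zzw (a j.castSucc + 1)).prod))
      = (2:Rt) • wd (W2 0 (k+2)) + ∑ j ∈ Finset.range (k+1), wd (W2 (j+1) (k-j+1)) := by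
  rw [antidiagTuple_one (k+2), Finset.sum_image (by
    intro i _ j _ h
    by_contra hij
    have h1 := congrFun h i
    beta_reduce at h1
    rw [Pi.single_eq_same, Pi.single_eq_of_ne (fun hc => hij hc) 1] at h1
    exact one_ne_zero h1)]
  rw [Fin.sum_univ_castSucc]
  have hlast : ∀ (a : Fin (k+2) → ℕ), a = Pi.single (Fin.last (k+1)) 1 →
      ((a (Fin.last (k+1)) + 1 : ℕ) : Rt) •
          (zzw (a (Fin.last (k+1)) + 2) *
            (List.ofFn fun j : Fin (k+1) => zzw (a j.castSucc + 1)).prod)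
        = (2:Rt) • wd (W2 0 (k+2)) := by
    rintro a rfl
    rw [Pi.single_eq_same]
    have htail : (List.ofFn fun j : Fin (k+1) =>
        zzw ((Pi.single (Fin.last (k+1)) 1 : Fin (k+2) → ℕ) j.castSucc + 1)) = List.replicate (k+1) wy := by
      rw [show (fun j : Fin (k+1) =>
          zzw ((Pi.single (Fin.last (k+1)) 1 : Fin (k+2) → ℕ) j.castSucc + 1)) = fun _ => wy from
        funext fun j => by
          rw [Pi.single_eq_of_ne (Fin.castSucc_lt_last j).ne 1, zzw_one], List.ofFn_const]
    rw [htail, List.prod_replicate, show (1:ℕ)+2 = 3 from rfl, R1last,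
      show (((1:ℕ)+1 : ℕ) : Rt) = 2 by norm_num]
  rw [hlast _ rfl]
  have hcs : ∀ (i : Fin (k+1)) (a : Fin (k+2) → ℕ), a = Pi.single (Fin.castSucc i) 1 →
      ((a (Fin.last (k+1)) + 1 : ℕ) : Rt) •
          (zzw (a (Fin.last (k+1)) + 2) *
            (List.ofFn fun j : Fin (k+1) => zzw (a j.castSucc + 1)).prod)
        = wd (W2 ((i:ℕ)+1) (k-(i:ℕ)+1)) := by
    rintro i a rfl
    rw [Pi.single_eq_of_ne (Fin.castSucc_lt_last i).ne' 1]
    have htail : (List.ofFn fun j : Fin (k+1) =>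
        zzw ((Pi.single (Fin.castSucc i) 1 : Fin (k+2) → ℕ) j.castSucc + 1))
          = List.ofFn fun j : Fin (k+1) => if j = i then zzw 2 else zzw 1 := by
      congr 1
      funext j
      by_cases hj : j = i
      · subst hj
        rw [if_pos rfl, Pi.single_eq_same]
      · rw [if_neg hj, Pi.single_eq_of_ne (fun hc => hj (Fin.castSucc_inj.mp hc)) 1]
    rw [htail, ofFn_ite_prod (k+1) i (zzw 2) (zzw 1), zzw_one,
      show (0:ℕ)+2 = 2 from rfl, show (((0:ℕ)+1 : ℕ) : Rt) = 1 by norm_num, one_smul,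
      show (k+1)-1-(i:ℕ) = k-(i:ℕ) by omega]
    rw [← mul_assoc, ← mul_assoc, zzw2_pow (i:ℕ), zzw_wd 2, wy_pow, ← wd_append, ← wd_append]
    congr 1
    simp [W2, YY, List.replicate_succ]
  rw [Finset.sum_congr rfl (fun i _ => hcs i _ rfl)]
  rw [Fin.sum_univ_eq_sum_range (fun j => wd (W2 (j+1) (k-j+1))) (k+1)]
  exact add_comm _ _

lemma Tpeel (k : ℕ) (hk0 : 0 < k) :
    ∑ i ∈ Finset.range (k+1), (2*(-1:Rt)^i+1) • wd (W3 i 0 (k-i+1))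
      = (3:Rt) • wd (W3 0 0 (k+1))
        + ∑ i ∈ Finset.range k, (-(2*(-1:Rt)^i - 1)) • wd (W3 (i+1) 0 (k-i)) := by
  rw [Finset.sum_range_succ' (fun i => (2*(-1:Rt)^i+1) • wd (W3 i 0 (k-i+1))) k]
  rw [show (2*(-1:Rt)^0+1) = 3 by norm_num, show k-0+1 = k+1 by omega, add_comm]
  congr 1
  refine Finset.sum_congr rfl fun i hi => ?_
  have hik : i < k := Finset.mem_range.mp hi
  rw [show k-(i+1)+1 = k-i by omega,
    show (2*(-1:Rt)^(i+1)+1) = -(2*(-1:Rt)^i-1) by rw [pow_succ]; ring]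

theorem alt_sum_even' (k : ℕ) (hk : Even k) (hk0 : 0 < k) :
    ∑ j ∈ Finset.range (k + 1),
      ((-1 : Rt) ^ j) • tshH (zzw 2 * wy ^ j) (zzw 2 * wy ^ (k - j)) =
    (2 : Rt) •
      ((∑ a ∈ Finset.Nat.antidiagonalTuple (k + 2) 1,
          ((a (Fin.last (k + 1)) + 1 : ℕ) : Rt) •
            (zzw (a (Fin.last (k + 1)) + 2) *
              (List.ofFn fun j : Fin (k + 1) => zzw (a j.castSucc + 1)).prod)) +
        (Polynomial.X : Rt) •
          (∑ i ∈ Finset.range k,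
            (2 * (-1 : Rt) ^ i - 1) • (zzw 2 * wy ^ i * zzw 3 * wy ^ (k - i - 1))) -
        (3 * Polynomial.X : Rt) • (zzw 4 * wy ^ k)) := by
  have hL : ∀ j ∈ Finset.range (k+1),
      ((-1 : Rt) ^ j) • tshH (zzw 2 * wy ^ j) (zzw 2 * wy ^ (k - j))
        = (-1:Rt)^j • (wd [0] * GGx j (k-j)) + (-1:Rt)^j • (wd [0] * GGx (k-j) j) := by
    intro j hj
    rw [zzw2_pow j, zzw2_pow (k-j), tshH_wd, tshW_main j (k-j), smul_add]
  rw [Finset.sum_congr rfl hL, Finset.sum_add_distrib]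
  have hrefl : (∑ j ∈ Finset.range (k+1), (-1:Rt)^j • (wd [0] * GGx (k-j) j))
      = ∑ j ∈ Finset.range (k+1), (-1:Rt)^j • (wd [0] * GGx j (k-j)) := by
    rw [← Finset.sum_range_reflect (fun j => (-1:Rt)^j • (wd [0] * GGx (k-j) j)) (k+1)]
    refine Finset.sum_congr rfl fun j hj => ?_
    have hjk : j ≤ k := by
      have := Finset.mem_range.mp hj; omega
    rw [show k+1-1-j = k-j by omega, show k-(k-j) = j by omega, neg_one_pow_sub k j hk hjk]
  rw [hrefl, ← two_smul Rt (∑ j ∈ Finset.range (k+1), (-1:Rt)^j • (wd [0] * GGx j (k-j))),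
    main_sum k hk]
  rw [R1eq k]
  have hR2 : ∀ i ∈ Finset.range k,
      (2 * (-1 : Rt) ^ i - 1) • (zzw 2 * wy ^ i * zzw 3 * wy ^ (k - i - 1))
        = (2 * (-1 : Rt) ^ i - 1) • wd (W3 (i+1) 0 (k-i)) := by
    intro i hi
    rw [R2word k i (Finset.mem_range.mp hi)]
  rw [Finset.sum_congr rfl hR2, R3word k]
  congr 1
  rw [Tpeel k hk0, smul_add]
  have e1 : (Polynomial.X : Rt) • ((3:Rt) • wd (W3 0 0 (k+1)))
      = (3 * Polynomial.X : Rt) • wd (W3 0 0 (k+1)) := by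
    rw [smul_smul, mul_comm]
  have e2 : (∑ i ∈ Finset.range k, (-(2*(-1:Rt)^i - 1)) • wd (W3 (i+1) 0 (k-i)))
      = -∑ i ∈ Finset.range k, (2*(-1:Rt)^i - 1) • wd (W3 (i+1) 0 (k-i)) := by
    rw [← Finset.sum_neg_distrib]
    exact Finset.sum_congr rfl fun i _ => by rw [neg_smul]
  rw [e1, e2, smul_neg]
  abel


end Aux

/-- For even positive `k`,
`Σ_{j=0}^{k} (−1)^j (z₂z₁^j ⧢_t z₂z₁^{k−j})
 = 2[ Σ_{a₁+⋯+a_{k+2}=1} (a_{k+2}+1) z_{a_{k+2}+2} z_{a₁+1}⋯z_{a_{k+1}+1}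
     + t Σ_{i=0}^{k−1} (2(−1)^i−1) z₂z₁^i z₃ z₁^{k−i−1} − 3t z₄ z₁^k ]`. -/
theorem alt_sum_even (k : ℕ) (hk : Even k) (hk0 : 0 < k) :
    ∑ j ∈ Finset.range (k + 1),
      ((-1 : Rt) ^ j) • tshH (zzw 2 * wy ^ j) (zzw 2 * wy ^ (k - j)) =
    (2 : Rt) •
      ((∑ a ∈ Finset.Nat.antidiagonalTuple (k + 2) 1,
          ((a (Fin.last (k + 1)) + 1 : ℕ) : Rt) •
            (zzw (a (Fin.last (k + 1)) + 2) *
              (List.ofFn fun j : Fin (k + 1) => zzw (a j.castSucc + 1)).prod)) +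
        (Polynomial.X : Rt) •
          (∑ i ∈ Finset.range k,
            (2 * (-1 : Rt) ^ i - 1) • (zzw 2 * wy ^ i * zzw 3 * wy ^ (k - i - 1))) -
        (3 * Polynomial.X : Rt) • (zzw 4 * wy ^ k)) := alt_sum_even' k hk hk0
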